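/- Let q̂ and q be occupancy measures on a loop-free layered MDP induced by the same policy π but by transition kernels P̂ and P respectively (i.e., q̂(x,a,x') = d̂(x)π(a|x)P̂(x'|x,a) and q(x,a,x') = d(x)π(a|x)P(x'|x,a), where d̂, d are the induced state-visitation probabilities with d̂(x₀) = d(x₀) = 1). Then Σ_ℓ Σ_{x∈X_ℓ} Σ_a ‖q̂(x,a,·) − q(x,a,·)‖₁ ≤ Σ_{j=0}^{L−1} Σ_{ℓ=0}^{j} Σ_{x∈X_ℓ} Σ_a π(a|x)·d̂(x)·‖P̂(·|x,a) − P(·|x,a)‖₁. -/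

import Mathlib

/-- Occupancy-measure mismatch bound: for two occupancy measures induced by
the same policy `π` but different transition kernels `P̂, P` on a loop-free
layered MDP, the total ℓ₁ mismatch is bounded by the cumulative, visitation-
weighted ℓ₁ mismatch of the transition kernels. -/
theorem stmt_15 (L : ℕ) (X : ℕ → Type*) [∀ ℓ, Fintype (X ℓ)] [Unique (X 0)]
    {A : Type*} [Fintype A]
    (π : (ℓ : ℕ) → X ℓ → A → ℝ)
    (Phat P : (ℓ : ℕ) → X ℓ → A → X (ℓ + 1) → ℝ)
    (dhat d : (ℓ : ℕ) → X ℓ → ℝ)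
    (hπ0 : ∀ ℓ x a, 0 ≤ π ℓ x a) (hπ1 : ∀ ℓ x, ∑ a, π ℓ x a = 1)
    (hPhat0 : ∀ ℓ x a x', 0 ≤ Phat ℓ x a x')
    (hPhat1 : ∀ ℓ x a, ∑ x', Phat ℓ x a x' = 1)
    (hP0 : ∀ ℓ x a x', 0 ≤ P ℓ x a x')
    (hP1 : ∀ ℓ x a, ∑ x', P ℓ x a x' = 1)
    (hd0 : ∀ x : X 0, dhat 0 x = 1 ∧ d 0 x = 1)
    (hdhatrec : ∀ ℓ (x' : X (ℓ + 1)),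
      dhat (ℓ + 1) x' = ∑ x : X ℓ, ∑ a, dhat ℓ x * π ℓ x a * Phat ℓ x a x')
    (hdrec : ∀ ℓ (x' : X (ℓ + 1)),
      d (ℓ + 1) x' = ∑ x : X ℓ, ∑ a, d ℓ x * π ℓ x a * P ℓ x a x') :
    ∑ ℓ ∈ Finset.range L, ∑ x : X ℓ, ∑ a : A, ∑ x' : X (ℓ + 1),
        |dhat ℓ x * π ℓ x a * Phat ℓ x a x' - d ℓ x * π ℓ x a * P ℓ x a x'|
      ≤ ∑ j ∈ Finset.range L, ∑ ℓ ∈ Finset.range (j + 1), ∑ x : X ℓ, ∑ a : A,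
          π ℓ x a * dhat ℓ x * ∑ x' : X (ℓ + 1), |Phat ℓ x a x' - P ℓ x a x'| := by

  set Δ := fun ℓ => ∑ x : X ℓ, ∑ a : A,
      π ℓ x a * dhat ℓ x * ∑ x' : X (ℓ + 1), |Phat ℓ x a x' - P ℓ x a x'| with hΔ
  set e := fun ℓ => ∑ x : X ℓ, |dhat ℓ x - d ℓ x| with he
  -- nonnegativity of dhat
  have hdh : ∀ ℓ (x : X ℓ), 0 ≤ dhat ℓ x := by
    intro ℓ
    induction ℓ with
    | zero => intro x; rw [(hd0 x).1]; norm_num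
    | succ n ih =>
      intro x'
      rw [hdhatrec n x']
      apply Finset.sum_nonneg; intro x _
      apply Finset.sum_nonneg; intro a _
      exact mul_nonneg (mul_nonneg (ih x) (hπ0 n x a)) (hPhat0 n x a x')
  -- key per-layer bound
  have key : ∀ ℓ, (∑ x : X ℓ, ∑ a : A, ∑ x' : X (ℓ + 1),
      |dhat ℓ x * π ℓ x a * Phat ℓ x a x' - d ℓ x * π ℓ x a * P ℓ x a x'|)
      ≤ e ℓ + Δ ℓ := by
    intro ℓ
    have step : ∀ (x : X ℓ) (a : A),
        (∑ x' : X (ℓ + 1), |dhat ℓ x * π ℓ x a * Phat ℓ x a x'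
            - d ℓ x * π ℓ x a * P ℓ x a x'|)
        ≤ |dhat ℓ x - d ℓ x| * π ℓ x a
          + π ℓ x a * dhat ℓ x * ∑ x' : X (ℓ + 1), |Phat ℓ x a x' - P ℓ x a x'| := by
      intro x a
      have pt : ∀ x' : X (ℓ + 1),
          |dhat ℓ x * π ℓ x a * Phat ℓ x a x' - d ℓ x * π ℓ x a * P ℓ x a x'|
          ≤ |dhat ℓ x - d ℓ x| * (π ℓ x a * P ℓ x a x')
            + π ℓ x a * dhat ℓ x * |Phat ℓ x a x' - P ℓ x a x'| := by
        intro x'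
        have hid : dhat ℓ x * π ℓ x a * Phat ℓ x a x' - d ℓ x * π ℓ x a * P ℓ x a x'
            = (dhat ℓ x - d ℓ x) * (π ℓ x a * P ℓ x a x')
              + (π ℓ x a * dhat ℓ x) * (Phat ℓ x a x' - P ℓ x a x') := by ring
        rw [hid]
        calc |(dhat ℓ x - d ℓ x) * (π ℓ x a * P ℓ x a x')
              + (π ℓ x a * dhat ℓ x) * (Phat ℓ x a x' - P ℓ x a x')|
            ≤ |(dhat ℓ x - d ℓ x) * (π ℓ x a * P ℓ x a x')|
              + |(π ℓ x a * dhat ℓ x) * (Phat ℓ x a x' - P ℓ x a x')| := abs_add_le _ _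
          _ = |dhat ℓ x - d ℓ x| * (π ℓ x a * P ℓ x a x')
              + π ℓ x a * dhat ℓ x * |Phat ℓ x a x' - P ℓ x a x'| := by
              simp only [abs_mul, abs_of_nonneg (hπ0 ℓ x a),
                abs_of_nonneg (hP0 ℓ x a x'), abs_of_nonneg (hdh ℓ x)]
      calc (∑ x' : X (ℓ + 1), |dhat ℓ x * π ℓ x a * Phat ℓ x a x'
              - d ℓ x * π ℓ x a * P ℓ x a x'|)
          ≤ ∑ x' : X (ℓ + 1), (|dhat ℓ x - d ℓ x| * (π ℓ x a * P ℓ x a x')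
              + π ℓ x a * dhat ℓ x * |Phat ℓ x a x' - P ℓ x a x'|) :=
            Finset.sum_le_sum fun x' _ => pt x'
        _ = |dhat ℓ x - d ℓ x| * π ℓ x a
              + π ℓ x a * dhat ℓ x * ∑ x' : X (ℓ + 1), |Phat ℓ x a x' - P ℓ x a x'| := by
            rw [Finset.sum_add_distrib, ← Finset.mul_sum, ← Finset.mul_sum,
              ← Finset.mul_sum, hP1 ℓ x a, mul_one]
    calc (∑ x : X ℓ, ∑ a : A, ∑ x' : X (ℓ + 1),
          |dhat ℓ x * π ℓ x a * Phat ℓ x a x' - d ℓ x * π ℓ x a * P ℓ x a x'|)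
        ≤ ∑ x : X ℓ, ∑ a : A, (|dhat ℓ x - d ℓ x| * π ℓ x a
            + π ℓ x a * dhat ℓ x * ∑ x' : X (ℓ + 1), |Phat ℓ x a x' - P ℓ x a x'|) :=
          Finset.sum_le_sum fun x _ => Finset.sum_le_sum fun a _ => step x a
      _ = e ℓ + Δ ℓ := by
          simp only [Finset.sum_add_distrib, he, hΔ]
          congr 1
          apply Finset.sum_congr rfl
          intro x _
          rw [← Finset.mul_sum, hπ1 ℓ x, mul_one]
  -- recursion for e
  have erec : ∀ ℓ, e (ℓ + 1) ≤ e ℓ + Δ ℓ := by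
    intro ℓ
    have h1 : e (ℓ + 1) ≤ ∑ x : X ℓ, ∑ a : A, ∑ x' : X (ℓ + 1),
        |dhat ℓ x * π ℓ x a * Phat ℓ x a x' - d ℓ x * π ℓ x a * P ℓ x a x'| := by
      rw [he]
      calc (∑ x' : X (ℓ + 1), |dhat (ℓ + 1) x' - d (ℓ + 1) x'|)
          ≤ ∑ x' : X (ℓ + 1), ∑ x : X ℓ, ∑ a : A,
              |dhat ℓ x * π ℓ x a * Phat ℓ x a x' - d ℓ x * π ℓ x a * P ℓ x a x'| := by
            apply Finset.sum_le_sum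
            intro x' _
            rw [hdhatrec ℓ x', hdrec ℓ x', ← Finset.sum_sub_distrib]
            refine (Finset.abs_sum_le_sum_abs _ _).trans ?_
            apply Finset.sum_le_sum
            intro x _
            rw [← Finset.sum_sub_distrib]
            exact Finset.abs_sum_le_sum_abs _ _
        _ = ∑ x : X ℓ, ∑ a : A, ∑ x' : X (ℓ + 1),
              |dhat ℓ x * π ℓ x a * Phat ℓ x a x' - d ℓ x * π ℓ x a * P ℓ x a x'| := by
            rw [Finset.sum_comm]
            apply Finset.sum_congr rfl
            intro x _
            rw [Finset.sum_comm]
    exact h1.trans (key ℓ)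
  have e0 : e 0 = 0 := by
    rw [he]
    apply Finset.sum_eq_zero
    intro x _
    rw [(hd0 x).1, (hd0 x).2, sub_self, abs_zero]
  have ebound : ∀ ℓ, e ℓ ≤ ∑ j ∈ Finset.range ℓ, Δ j := by
    intro ℓ
    induction ℓ with
    | zero => simp [e0]
    | succ n ih =>
      rw [Finset.sum_range_succ]
      calc e (n + 1) ≤ e n + Δ n := erec n
        _ ≤ (∑ j ∈ Finset.range n, Δ j) + Δ n := by linarith
  apply Finset.sum_le_sum
  intro ℓ _
  calc (∑ x : X ℓ, ∑ a : A, ∑ x' : X (ℓ + 1),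
        |dhat ℓ x * π ℓ x a * Phat ℓ x a x' - d ℓ x * π ℓ x a * P ℓ x a x'|)
      ≤ e ℓ + Δ ℓ := key ℓ
    _ ≤ (∑ j ∈ Finset.range ℓ, Δ j) + Δ ℓ := by have := ebound ℓ; linarith
    _ = ∑ j ∈ Finset.range (ℓ + 1), Δ j := (Finset.sum_range_succ _ _).symm
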